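/- Let x ≥ 0 be a point at which both Φ and F are differentiable, with Φ′(x) ≥ 0 and F′(x) ≤ 0. Then Q is differentiable at x with Q′(x) = a·Φ′(x)·Q(x) + exp(a·Φ(x))·(1 + F′(x)), and this derivative satisfies Q′(x) ≤ exp(a·Φ₁) < 1. -/

import Mathlib

open Real Set Filter

/-- At a point of differentiability with Φ′(x) ≥ 0 and F′(x) ≤ 0, the return map Q is
differentiable with Q′(x) = aΦ′(x)Q(x) + exp(aΦ(x))(1 + F′(x)) ≤ exp(aΦ₁) < 1. -/
theorem stmt17
    (a : ℝ) (ha : a < 0) (Φ F : ℝ → ℝ)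
    (hΦc : ContinuousOn Φ (Set.Ici 0)) (hFc : ContinuousOn F (Set.Ici 0))
    (Φ₁ Φ₂ F₁ F₂ : ℝ) (hΦ₁ : 0 < Φ₁) (hF₁ : 0 < F₁)
    (hΦb : ∀ x : ℝ, 0 ≤ x → Φ₁ ≤ Φ x ∧ Φ x ≤ Φ₂)
    (hFb : ∀ x : ℝ, 0 ≤ x → F₁ ≤ F x ∧ F x ≤ F₂)
    (Q : ℝ → ℝ) (hQ : ∀ x : ℝ, Q x = Real.exp (a * Φ x) * (x + F x))
    (x Φ' F' : ℝ) (hx : 0 ≤ x)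
    (hΦd : HasDerivAt Φ Φ' x) (hFd : HasDerivAt F F' x)
    (hΦ'nn : 0 ≤ Φ') (hF'np : F' ≤ 0) :
    HasDerivAt Q (a * Φ' * Q x + Real.exp (a * Φ x) * (1 + F')) x ∧
    a * Φ' * Q x + Real.exp (a * Φ x) * (1 + F') ≤ Real.exp (a * Φ₁) ∧
    Real.exp (a * Φ₁) < 1 := by
  have hd : HasDerivAt (fun y => Real.exp (a * Φ y) * (y + F y))
      (a * Φ' * Real.exp (a * Φ x) * (x + F x) + Real.exp (a * Φ x) * (1 + F')) x := by
    have h1 : HasDerivAt (fun y => Real.exp (a * Φ y)) (a * Φ' * Real.exp (a * Φ x)) x := by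
      have := ((hΦd.const_mul a).exp)
      convert this using 1; ring
    have h2 : HasDerivAt (fun y => y + F y) (1 + F') x := (hasDerivAt_id x).add hFd
    have := h1.mul h2
    exact this
  have hQeq : Q = fun y => Real.exp (a * Φ y) * (y + F y) := funext hQ
  have hder : HasDerivAt Q (a * Φ' * Q x + Real.exp (a * Φ x) * (1 + F')) x := by
    rw [hQeq]
    convert hd using 1
    ring
  refine ⟨hder, ?_, ?_⟩
  · have hQnn : 0 ≤ Q x := by
      rw [hQ x]
      have h := (hFb x hx).1
      have : (0:ℝ) ≤ x + F x := by linarith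
      positivity
    have h1 : a * Φ' * Q x ≤ 0 :=
      mul_nonpos_of_nonpos_of_nonneg (mul_nonpos_of_nonpos_of_nonneg ha.le hΦ'nn) hQnn
    have h2 : Real.exp (a * Φ x) * (1 + F') ≤ Real.exp (a * Φ₁) := by
      calc Real.exp (a * Φ x) * (1 + F') ≤ Real.exp (a * Φ x) * 1 := by
            apply mul_le_mul_of_nonneg_left (by linarith) (Real.exp_nonneg _)
        _ ≤ Real.exp (a * Φ₁) := by
            rw [mul_one]
            exact Real.exp_le_exp.mpr (by nlinarith [(hΦb x hx).1])
    linarith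
  · exact Real.exp_lt_one_iff.mpr (by nlinarith)
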